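/- Let $V \ge 0$ be a random variable with $\mathbb{P}(V \ge tR) \le w_1 e^{-w_2 t}$ for all $t > 0$, where $w_1, w_2, R > 0$, and let $\delta_0 > 0$. Then there exist a constant $C > 0$ (depending only on $w_1, w_2, \delta_0$) and $R_0 > 0$ such that for all $0 < R \le R_0$: $\mathbb{E}\left[\exp\left(-\frac{\delta_0^2}{4V}\right)\right] \le C \exp\left(-\frac{1}{2} w_2^{1/2} \delta_0 R^{-1/2}\right)$. -/

import Mathlib

open MeasureTheory

/-- Exponentially small bound for the integrated probability of false selection:
there are constants `C > 0` and `R₀ > 0` depending only on `w₁, w₂, δ₀` such that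
for all `0 < R ≤ R₀` and any nonnegative random variable `V` with
`P(V ≥ tR) ≤ w₁ e^{-w₂ t}` for all `t > 0`,
`E[exp(-δ₀²/(4V))] ≤ C exp(-½ √w₂ δ₀ / √R)`. (The integrand is `0` where `V = 0`.) -/
theorem stmt_16 (w1 w2 δ0 : ℝ) (hw1 : 0 < w1) (hw2 : 0 < w2) (hδ0 : 0 < δ0) :
    ∃ C > (0 : ℝ), ∃ R0 > (0 : ℝ), ∀ R : ℝ, 0 < R → R ≤ R0 →
      ∀ (Ω : Type) (_ : MeasurableSpace Ω) (P : Measure Ω), IsProbabilityMeasure P →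
        ∀ V : Ω → ℝ, Measurable V → (∀ ω, 0 ≤ V ω) →
          (∀ t : ℝ, 0 < t →
            P {ω | t * R ≤ V ω} ≤ ENNReal.ofReal (w1 * Real.exp (-w2 * t))) →
          ∫ ω, (if V ω = 0 then 0 else Real.exp (-δ0 ^ 2 / (4 * V ω))) ∂P ≤
            C * Real.exp (-(Real.sqrt w2 * δ0 / (2 * Real.sqrt R))) := by
  refine ⟨w1 + 1, by linarith, 1, one_pos, ?_⟩
  intro R hR _ Ω mΩ P hP V hV hVnn htail
  have hsR : 0 < Real.sqrt R := Real.sqrt_pos.mpr hR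
  have hsw : 0 < Real.sqrt w2 := Real.sqrt_pos.mpr hw2
  set E : ℝ := Real.sqrt w2 * δ0 / (2 * Real.sqrt R) with hE
  have hEpos : 0 < E := by positivity
  set t0 : ℝ := E / w2 with ht0
  have ht0pos : 0 < t0 := by positivity
  have hE2 : 4 * E ^ 2 * R = w2 * δ0 ^ 2 := by
    rw [hE, div_pow, mul_pow, mul_pow, Real.sq_sqrt hw2.le, Real.sq_sqrt hR.le]
    field_simp
    ring
  have hkey1 : w2 * t0 = E := by
    rw [ht0]; field_simp
  have hkey2 : δ0 ^ 2 / (4 * (t0 * R)) = E := by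
    rw [ht0, div_eq_iff (by positivity)]
    field_simp
    nlinarith [hE2]
  set f : Ω → ℝ := fun ω => if V ω = 0 then 0 else Real.exp (-δ0 ^ 2 / (4 * V ω)) with hf
  set A : Set Ω := {ω | t0 * R ≤ V ω} with hA
  have hAmeas : MeasurableSet A := measurableSet_le measurable_const hV
  set g : Ω → ℝ := fun ω => A.indicator (fun _ => (1:ℝ)) ω + Real.exp (-E) with hg
  have hfmeas : Measurable f := by
    apply Measurable.ite (hV (measurableSet_singleton 0)) measurable_const
    exact (Measurable.div measurable_const (measurable_const.mul hV)).exp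
  have hf1 : ∀ ω, f ω ≤ 1 := by
    intro ω
    simp only [hf]
    split
    · norm_num
    · refine Real.exp_le_one_iff.mpr ?_
      rename_i h0
      have hVpos : 0 < V ω := lt_of_le_of_ne (hVnn ω) (Ne.symm h0)
      rw [neg_div, neg_nonpos]
      positivity
  have hf0 : ∀ ω, 0 ≤ f ω := by
    intro ω
    simp only [hf]
    split
    · exact le_refl 0
    · positivity
  have hfle : ∀ ω, f ω ≤ g ω := by
    intro ω
    by_cases hω : ω ∈ A
    · simp only [hg, Set.indicator_of_mem hω]
      have := Real.exp_pos (-E)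
      have := hf1 ω
      linarith
    · simp only [hg, Set.indicator_of_notMem hω, zero_add]
      simp only [hf]
      split
      · positivity
      · rename_i h0
        have hVpos : 0 < V ω := lt_of_le_of_ne (hVnn ω) (Ne.symm h0)
        have hVlt : V ω < t0 * R := not_le.mp hω
        apply Real.exp_le_exp.mpr
        rw [neg_div, neg_le_neg_iff]
        calc E = δ0 ^ 2 / (4 * (t0 * R)) := hkey2.symm
          _ ≤ δ0 ^ 2 / (4 * V ω) := by
              apply div_le_div_of_nonneg_left (by positivity) (by positivity)
              linarith
  have hfint : Integrable f P := by
    apply Integrable.mono' (integrable_const (1:ℝ)) hfmeas.aestronglyMeasurable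
    filter_upwards with ω
    rw [Real.norm_eq_abs, abs_le]
    exact ⟨by linarith [hf0 ω], hf1 ω⟩
  have hgint : Integrable g P := by
    apply Integrable.add _ (integrable_const _)
    exact (integrable_const (1:ℝ)).indicator hAmeas
  have hmono : ∫ ω, f ω ∂P ≤ ∫ ω, g ω ∂P := integral_mono hfint hgint hfle
  have hgval : ∫ ω, g ω ∂P = (P A).toReal + Real.exp (-E) := by
    rw [hg, integral_add ((integrable_const (1:ℝ)).indicator hAmeas) (integrable_const _),
      integral_indicator_const _ hAmeas, integral_const]
    simp [measure_univ, measureReal_def]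
  have hPA : (P A).toReal ≤ w1 * Real.exp (-E) := by
    apply ENNReal.toReal_le_of_le_ofReal (by positivity)
    have h := htail t0 ht0pos
    rw [neg_mul, hkey1] at h
    rw [hA]
    exact h
  calc ∫ ω, f ω ∂P ≤ (P A).toReal + Real.exp (-E) := by rw [← hgval]; exact hmono
    _ ≤ w1 * Real.exp (-E) + Real.exp (-E) := by linarith
    _ = (w1 + 1) * Real.exp (-E) := by ring
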